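/- Over a finite field 𝔽_q of odd characteristic with −1 a square and a ∈ 𝔽_q^×: if a³ ≠ 4 then the affine curve {(X,Y) : Y² − X² + aX = 1/a} has exactly q−1 points, and if a³ = 4 it has exactly 2q−1 points. -/

import Mathlib

open Finset

lemma card_mul_eq_aux (F : Type*) [Field F] [Fintype F] [DecidableEq F] (c : F) :
    Nat.card {p : F × F // p.1 * p.2 = c} =
      if c = 0 then 2 * Fintype.card F - 1 else Fintype.card F - 1 := by
  rw [Nat.card_eq_fintype_card]
  split_ifs with hc
  · subst hc
    rw [Fintype.card_subtype]
    have h : (univ.filter (fun p : F × F => p.1 * p.2 = 0)) =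
        (({0} : Finset F) ×ˢ univ) ∪ (univ ×ˢ ({0} : Finset F)) := by
      ext ⟨x, y⟩
      simp [Finset.mem_product, mul_eq_zero, eq_comm]
    rw [h]
    have hinter : ((({0} : Finset F) ×ˢ univ) ∩ (univ ×ˢ ({0} : Finset F)))
        = ({0} : Finset F) ×ˢ ({0} : Finset F) := by
      ext ⟨x, y⟩; simp [Finset.mem_product, and_comm, eq_comm, Prod.ext_iff]
    have := Finset.card_union_add_card_inter (({0} : Finset F) ×ˢ (univ : Finset F))
      ((univ : Finset F) ×ˢ ({0} : Finset F))
    rw [hinter] at this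
    simp only [Finset.card_product, Finset.card_singleton, Finset.card_univ,
      one_mul, mul_one] at this
    omega
  · rw [← Fintype.card_units (α := F)]
    refine Fintype.card_congr (Equiv.symm ?_)
    refine ⟨fun u => ⟨(u, c * (u : F)⁻¹), by field_simp⟩,
      fun p => Units.mk0 p.1.1 ?_, ?_, ?_⟩
    · intro h
      apply hc
      rw [← p.2, h, zero_mul]
    · intro u
      ext
      simp
    · rintro ⟨⟨x, y⟩, hp⟩
      have hx : x ≠ 0 := by
        intro h; apply hc; rw [← hp, h, zero_mul]
      ext
      · rfl
      · simp only [Units.val_mk0]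
        field_simp
        rw [← hp]

/-- Over a finite field `𝔽_q`, `q` odd with `−1` a square (`q ≡ 1 (mod 4)`),
and `a ≠ 0`: the affine conic `{(X,Y) : Y² − X² + aX = 1/a}` has exactly
`q − 1` points if `a³ ≠ 4` and exactly `2q − 1` points if `a³ = 4`. -/
theorem card_affine_conic (F : Type*) [Field F] [Fintype F] [DecidableEq F]
    (hq : Fintype.card F % 4 = 1) (a : F) (ha : a ≠ 0) :
    Nat.card {p : F × F // p.2 ^ 2 - p.1 ^ 2 + a * p.1 = a⁻¹} =
      if a ^ 3 = 4 then 2 * Fintype.card F - 1 else Fintype.card F - 1 := by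
  have h2 : (2 : F) ≠ 0 := by
    intro h
    have hchar : ringChar F = 2 := by
      have hd := (CharP.cast_eq_zero_iff F (ringChar F) 2).mp (by exact_mod_cast h)
      have h1 : ringChar F ≠ 1 := CharP.ringChar_ne_one
      rcases (Nat.dvd_prime Nat.prime_two).mp hd with h' | h' <;> omega
    have := FiniteField.even_card_of_char_two hchar
    omega
  have h4 : (4 : F) ≠ 0 := by
    rw [show (4 : F) = 2 * 2 by norm_num]; exact mul_ne_zero h2 h2
  set c : F := a⁻¹ - (a / 2) ^ 2 with hc
  have key : Nat.card {p : F × F // p.2 ^ 2 - p.1 ^ 2 + a * p.1 = a⁻¹} =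
      Nat.card {p : F × F // p.1 * p.2 = c} := by
    apply Nat.card_congr
    refine ⟨fun p => ⟨(p.1.2 + p.1.1 - a / 2, p.1.2 - p.1.1 + a / 2), ?_⟩,
      fun p => ⟨((p.1.1 - p.1.2) / 2 + a / 2, (p.1.1 + p.1.2) / 2), ?_⟩, ?_, ?_⟩
    · have h := p.2
      have h' : ((p : F × F).2 ^ 2 - (p : F × F).1 ^ 2 + a * (p : F × F).1) * a = 1 := by
        rw [h]; field_simp
      simp only [hc]
      field_simp
      linear_combination 4 * h'
    · have h := p.2
      have h' : (p : F × F).1 * (p : F × F).2 * (4 * a) = 4 - a ^ 2 * a := by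
        rw [h, hc]; field_simp; ring
      field_simp
      linear_combination h'
    · rintro ⟨⟨x, y⟩, hp⟩
      refine Subtype.ext (Prod.ext ?_ ?_) <;> simp only
      · field_simp; ring
      · field_simp; ring
    · rintro ⟨⟨u, v⟩, hp⟩
      refine Subtype.ext (Prod.ext ?_ ?_) <;> simp only
      · field_simp; ring
      · field_simp; ring
  rw [key, card_mul_eq_aux]
  have hcz : c = 0 ↔ a ^ 3 = 4 := by
    rw [hc, sub_eq_zero]
    constructor
    · intro h
      have h' : a⁻¹ * a = (a / 2) ^ 2 * a := by rw [h]
      field_simp at h'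
      linear_combination -h'
    · intro h
      field_simp
      linear_combination -h
  simp [hcz]
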